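/- Suppose p, q are probability mass functions on a finite set S with p(s)+q(s) > 0 for all s, k > 0, and R̂ : S → ℝ satisfies |R̂(s) − k·p(s)/(p(s)+q(s))| ≤ ε_r for all s (reward generalization error). If additionally (1/(1−γ))·(∑_s p(s)·R̂(s) − ∑_s q(s)·R̂(s)) ≤ ε_π for some γ ∈ [0,1) and ε_π ≥ 0 (policy near-optimality), then ∑_s p(s)·(p(s)−q(s))/(p(s)+q(s)) ≤ ((1−γ)·ε_π + 2·ε_r)/k. -/

import Mathlib

theorem rank_game_main {S : Type*} [Fintype S] (p q : S → ℝ) (k γ επ εr : ℝ)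
    (Rhat : S → ℝ)
    (hp : ∀ s, 0 ≤ p s) (hp1 : ∑ s, p s = 1)
    (hq : ∀ s, 0 ≤ q s) (hq1 : ∑ s, q s = 1)
    (hpq : ∀ s, 0 < p s + q s) (hk : 0 < k)
    (hγ : 0 ≤ γ) (hγ1 : γ < 1) (hεπ : 0 ≤ επ) (hεr : 0 ≤ εr)
    (hgen : ∀ s, |Rhat s - k * p s / (p s + q s)| ≤ εr)
    (hpol : (1 / (1 - γ)) * ((∑ s, p s * Rhat s) - ∑ s, q s * Rhat s) ≤ επ) :
    (∑ s, p s * ((p s - q s) / (p s + q s))) ≤ ((1 - γ) * επ + 2 * εr) / k := by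
  have h1γ : 0 < 1 - γ := by linarith
  rw [div_mul_eq_mul_div, one_mul, div_le_iff₀ h1γ] at hpol
  have hsum : ∑ s, (p s - q s) * Rhat s ≤ (1 - γ) * επ := by
    have : ∑ s, (p s - q s) * Rhat s
        = (∑ s, p s * Rhat s) - ∑ s, q s * Rhat s := by
      rw [← Finset.sum_sub_distrib]; exact Finset.sum_congr rfl (fun s _ => by ring)
    rw [this]; linarith
  have herr : ∀ s, (p s - q s) * (k * p s / (p s + q s))
      ≤ (p s - q s) * Rhat s + (p s + q s) * εr := by
    intro s
    have h1 : |p s - q s| ≤ p s + q s :=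
      abs_le.mpr ⟨by linarith [hp s, hq s], by linarith [hp s, hq s]⟩
    have h2 : |k * p s / (p s + q s) - Rhat s| ≤ εr := by
      rw [abs_sub_comm]; exact hgen s
    have h3 : (p s - q s) * (k * p s / (p s + q s) - Rhat s) ≤ (p s + q s) * εr := by
      calc (p s - q s) * (k * p s / (p s + q s) - Rhat s)
          ≤ |(p s - q s) * (k * p s / (p s + q s) - Rhat s)| := le_abs_self _
        _ = |p s - q s| * |k * p s / (p s + q s) - Rhat s| := abs_mul _ _
        _ ≤ (p s + q s) * εr :=
            mul_le_mul h1 h2 (abs_nonneg _) (by linarith [hp s, hq s])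
    nlinarith [h3]
  have key : ∑ s, (p s - q s) * (k * p s / (p s + q s)) ≤ (1 - γ) * επ + 2 * εr := by
    calc ∑ s, (p s - q s) * (k * p s / (p s + q s))
        ≤ ∑ s, ((p s - q s) * Rhat s + (p s + q s) * εr) :=
          Finset.sum_le_sum (fun s _ => herr s)
      _ = (∑ s, (p s - q s) * Rhat s) + (∑ s, (p s + q s)) * εr := by
          rw [Finset.sum_add_distrib, Finset.sum_mul]
      _ = (∑ s, (p s - q s) * Rhat s) + 2 * εr := by
          rw [Finset.sum_add_distrib, hp1, hq1]; norm_num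
      _ ≤ (1 - γ) * επ + 2 * εr := by linarith
  rw [le_div_iff₀ hk]
  have heq : (∑ s, p s * ((p s - q s) / (p s + q s))) * k
      = ∑ s, (p s - q s) * (k * p s / (p s + q s)) := by
    rw [Finset.sum_mul]
    refine Finset.sum_congr rfl (fun s _ => ?_)
    have h0 : p s + q s ≠ 0 := (hpq s).ne'
    field_simp
  rw [heq]; exact key
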